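/- In a monoidal category, the endomorphism monoid of the tensor unit C(I, I) is commutative: for all scalars s, t : I → I, s ∘ t = t ∘ s. -/
import Mathlib

open CategoryTheory MonoidalCategory


/-- In a monoidal category, the endomorphism monoid of the tensor unit is
commutative: scalars commute. -/
theorem scalars_commute {C : Type*} [Category C] [MonoidalCategory C]
    (s t : 𝟙_ C ⟶ 𝟙_ C) : s ≫ t = t ≫ s := by
  have h1 : s = (ρ_ _).inv ≫ (s ▷ 𝟙_ C) ≫ (ρ_ _).hom := by simp
  have h2 : t = (λ_ _).inv ≫ (𝟙_ C ◁ t) ≫ (λ_ _).hom := by simp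
  calc s ≫ t = ((ρ_ _).inv ≫ (s ▷ 𝟙_ C) ≫ (ρ_ _).hom) ≫
        ((λ_ _).inv ≫ (𝟙_ C ◁ t) ≫ (λ_ _).hom) := by rw [← h1, ← h2]
    _ = (ρ_ _).inv ≫ ((s ▷ 𝟙_ C) ≫ (𝟙_ C ◁ t)) ≫ (λ_ _).hom := by
        rw [unitors_inv_equal, unitors_equal]; simp
    _ = (λ_ _).inv ≫ ((𝟙_ C ◁ t) ≫ (s ▷ 𝟙_ C)) ≫ (ρ_ _).hom := by
        rw [← whisker_exchange, unitors_inv_equal, unitors_equal]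
    _ = t ≫ s := by
        simp only [Category.assoc, ← MonoidalCategory.leftUnitor_inv_naturality_assoc]
        rw [unitors_inv_equal]; simp
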